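/- Let n ≥ 1 and suppose μ is a rotationally invariant Borel measure on ℝ^n of the form dμ(x) = V(|x|)dx, where V : [0,∞) → [0,∞) is continuous. Then μ(aB₂ⁿ+bB₂ⁿ+cB₂ⁿ) + μ(aB₂ⁿ) ≥ μ(aB₂ⁿ+bB₂ⁿ) + μ(aB₂ⁿ+cB₂ⁿ) for all a, b, c ≥ 0 if and only if the function r ↦ V(r)·r^{n−1} is increasing on (0,∞); and μ(aB₂ⁿ+bB₂ⁿ+cB₂ⁿ) + μ(aB₂ⁿ) ≤ μ(aB₂ⁿ+bB₂ⁿ) + μ(aB₂ⁿ+cB₂ⁿ) for all a, b, c ≥ 0 if and only if r ↦ V(r)·r^{n−1} is decreasing on (0,∞). -/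

import Mathlib

open MeasureTheory Set Filter Topology Pointwise

noncomputable section

lemma gshift_le {g : ℝ → ℝ} (hg : ContinuousOn g (Ici 0))
    (hmono : MonotoneOn g (Ioi 0)) {a b c : ℝ} (ha : 0 ≤ a) (hb : 0 ≤ b) (hc : 0 ≤ c) :
    ∫ r in a..(a+b), g r ≤ ∫ r in (a+c)..(a+b+c), g r := by
  have hmap : ∀ u v : ℝ, 0 ≤ u → Icc u v ⊆ Ici (0:ℝ) := fun u v hu x hx => le_trans hu hx.1
  have hgc : ContinuousOn (fun r => g (r + c)) (Icc a (a+b)) := by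
    apply hg.comp ((continuous_id.add continuous_const).continuousOn)
    intro x hx
    have := hx.1
    simp only [id_eq, mem_Ici, Pi.add_apply]
    linarith
  have hint1 : IntegrableOn g (Ioc a (a+b)) := by
    exact ((hg.mono (hmap a (a+b) ha)).integrableOn_Icc).mono_set Ioc_subset_Icc_self
  have hint2 : IntegrableOn (fun r => g (r + c)) (Ioc a (a+b)) :=
    hgc.integrableOn_Icc.mono_set Ioc_subset_Icc_self
  have hkey : (∫ r in (a+c)..(a+b+c), g r) = ∫ r in a..(a+b), g (r + c) := by
    rw [intervalIntegral.integral_comp_add_right]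
  rw [hkey, intervalIntegral.integral_of_le (by linarith : a ≤ a + b),
    intervalIntegral.integral_of_le (by linarith : a ≤ a + b)]
  apply setIntegral_mono_on hint1 hint2 measurableSet_Ioc
  intro x hx
  have hx0 : 0 < x := lt_of_le_of_lt ha hx.1
  exact hmono hx0 (by positivity : (0:ℝ) < x + c) (by linarith)

lemma mono_of_gshift {g : ℝ → ℝ} (hg : ContinuousOn g (Ici 0))
    (H : ∀ a b c : ℝ, 0 ≤ a → 0 ≤ b → 0 ≤ c →
      ∫ r in a..(a+b), g r ≤ ∫ r in (a+c)..(a+b+c), g r) :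
    MonotoneOn g (Ioi 0) := by
  intro x hx y hy hxy
  by_contra hlt
  push_neg at hlt
  set ε := (g x - g y) / 3 with hε_def
  have hε : 0 < ε := by simp only [hε_def]; linarith
  have hcx := (hg x (mem_Ici.mpr (le_of_lt hx))).mono (fun t (ht : t ∈ Ici (0:ℝ)) => ht)
  obtain ⟨δ₁, hδ₁, h₁⟩ := Metric.continuousWithinAt_iff.mp (hg x (mem_Ici.mpr (le_of_lt hx))) ε hε
  obtain ⟨δ₂, hδ₂, h₂⟩ := Metric.continuousWithinAt_iff.mp (hg y (mem_Ici.mpr (le_trans (le_of_lt hx) hxy))) ε hε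
  set h : ℝ := min δ₁ δ₂ / 2 with hh_def
  have hh : 0 < h := by positivity
  have hbound : ∀ t ∈ Icc x (x+h), g x - ε ≤ g t := by
    intro t ht
    have ht0 : t ∈ Ici (0:ℝ) := le_trans (le_of_lt hx) ht.1
    have : dist t x < δ₁ := by
      rw [Real.dist_eq, abs_of_nonneg (by linarith [ht.1])]
      have : h < δ₁ := by
        have := min_le_left δ₁ δ₂; simp only [hh_def]; linarith
      linarith [ht.2]
    have := h₁ ht0 this
    rw [Real.dist_eq, abs_lt] at this
    linarith [this.1]
  have hbound2 : ∀ t ∈ Icc y (y+h), g t ≤ g y + ε := by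
    intro t ht
    have ht0 : t ∈ Ici (0:ℝ) := le_trans (le_trans (le_of_lt hx) hxy) ht.1
    have : dist t y < δ₂ := by
      rw [Real.dist_eq, abs_of_nonneg (by linarith [ht.1])]
      have : h < δ₂ := by
        have := min_le_right δ₁ δ₂; simp only [hh_def]; linarith
      linarith [ht.2]
    have := h₂ ht0 this
    rw [Real.dist_eq, abs_lt] at this
    linarith [this.1]
  have hintx : IntervalIntegrable g volume x (x+h) := by
    apply ContinuousOn.intervalIntegrable
    apply hg.mono
    rw [uIcc_of_le (by linarith)]
    intro t ht; exact le_trans (le_of_lt hx) ht.1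
  have hinty : IntervalIntegrable g volume y (y+h) := by
    apply ContinuousOn.intervalIntegrable
    apply hg.mono
    rw [uIcc_of_le (by linarith)]
    intro t ht; exact le_trans (le_trans (le_of_lt hx) hxy) ht.1
  have hlow : h * (g x - ε) ≤ ∫ r in x..(x+h), g r := by
    have := intervalIntegral.integral_mono_on (by linarith : x ≤ x + h)
      (intervalIntegrable_const) hintx hbound
    rwa [intervalIntegral.integral_const, smul_eq_mul, add_sub_cancel_left] at this
  have hhigh : (∫ r in y..(y+h), g r) ≤ h * (g y + ε) := by
    have := intervalIntegral.integral_mono_on (by linarith : y ≤ y + h)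
      hinty (intervalIntegrable_const) hbound2
    rwa [intervalIntegral.integral_const, smul_eq_mul, add_sub_cancel_left] at this
  have H' := H x h (y - x) (le_of_lt hx) (le_of_lt hh) (by linarith)
  rw [show x + (y - x) = y by ring, show x + h + (y - x) = y + h by ring] at H'
  nlinarith


lemma measure_closedBall_formula (n : ℕ) (hn : 1 ≤ n) (V : ℝ → ℝ)
    (hVcont : ContinuousOn V (Ici 0)) (hVnonneg : ∀ r : ℝ, 0 ≤ r → 0 ≤ V r)
    {R : ℝ} (hR : 0 ≤ R) :
    (volume.withDensity fun x : EuclideanSpace ℝ (Fin n) => ENNReal.ofReal (V ‖x‖))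
      (Metric.closedBall 0 R)
    = ENNReal.ofReal (((n : ℝ) * (volume (Metric.ball (0:EuclideanSpace ℝ (Fin n)) 1)).toReal) *
        ∫ r in (0:ℝ)..R, V r * r ^ (n-1)) := by
  haveI : Nonempty (Fin n) := ⟨⟨0, hn⟩⟩
  haveI : Nontrivial (EuclideanSpace ℝ (Fin n)) := inferInstance
  set E := EuclideanSpace ℝ (Fin n) with hE
  rw [withDensity_apply _ measurableSet_closedBall]
  have hVn : ContinuousOn (fun x : E => V ‖x‖) (Metric.closedBall 0 R) := by
    apply hVcont.comp continuous_norm.continuousOn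
    intro x _; exact norm_nonneg x
  have hInt : IntegrableOn (fun x : E => V ‖x‖) (Metric.closedBall 0 R) :=
    hVn.integrableOn_compact (isCompact_closedBall 0 R)
  rw [← ofReal_integral_eq_lintegral_ofReal hInt
    (Filter.Eventually.of_forall fun x => hVnonneg _ (norm_nonneg _))]
  congr 1
  have h1 : (∫ x in Metric.closedBall (0:E) R, V ‖x‖) = ∫ x : E, (Iic R).indicator V ‖x‖ := by
    rw [← integral_indicator measurableSet_closedBall]
    congr 1; ext x
    by_cases hx : ‖x‖ ≤ R
    · rw [indicator_of_mem (mem_closedBall_zero_iff.mpr hx)]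
      exact (indicator_of_mem (mem_Iic.mpr hx) V).symm
    · rw [indicator_of_notMem (fun h => hx (mem_closedBall_zero_iff.mp h))]
      exact (indicator_of_notMem (fun h => hx (mem_Iic.mp h)) V).symm
  rw [h1, integral_fun_norm_addHaar volume ((Iic R).indicator V)]
  have hdim : Module.finrank ℝ E = n := finrank_euclideanSpace_fin
  rw [hdim]
  have h2 : (∫ y in Ioi (0:ℝ), y ^ (n-1) • (Iic R).indicator V y)
      = ∫ r in (0:ℝ)..R, V r * r ^ (n-1) := by
    have hpt : ∀ y : ℝ, y ^ (n-1) • (Iic R).indicator V y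
        = (Iic R).indicator (fun r => V r * r ^ (n-1)) y := by
      intro y
      by_cases hy : y ∈ Iic R
      · rw [indicator_of_mem hy, indicator_of_mem hy]; simp [mul_comm]
      · rw [indicator_of_notMem hy, indicator_of_notMem hy]; simp
    simp_rw [hpt]
    rw [setIntegral_indicator measurableSet_Iic, Ioi_inter_Iic,
      intervalIntegral.integral_of_le hR]
  rw [h2, nsmul_eq_mul, smul_eq_mul]
  simp only [Measure.real]
  ring

/-- For a rotationally invariant measure `dμ(x) = V(|x|)dx` on `ℝⁿ`, supermodularity
along centered Euclidean balls is equivalent to `r ↦ V(r)r^{n−1}` being increasing on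
`(0,∞)`, and submodularity is equivalent to `r ↦ V(r)r^{n−1}` being decreasing on
`(0,∞)`. -/
theorem ball_supermodularity_iff_monotone_density
    (n : ℕ) (hn : 1 ≤ n)
    (V : ℝ → ℝ) (hVcont : ContinuousOn V (Ici (0:ℝ)))
    (hVnonneg : ∀ r : ℝ, 0 ≤ r → 0 ≤ V r)
    (μ : Measure (EuclideanSpace ℝ (Fin n)))
    (hμ : μ = volume.withDensity fun x : EuclideanSpace ℝ (Fin n) =>
      ENNReal.ofReal (V ‖x‖)) :
    ((∀ a b c : ℝ, 0 ≤ a → 0 ≤ b → 0 ≤ c →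
        μ (a • Metric.closedBall (0 : EuclideanSpace ℝ (Fin n)) 1
            + b • Metric.closedBall (0 : EuclideanSpace ℝ (Fin n)) 1)
          + μ (a • Metric.closedBall (0 : EuclideanSpace ℝ (Fin n)) 1
            + c • Metric.closedBall (0 : EuclideanSpace ℝ (Fin n)) 1)
        ≤ μ (a • Metric.closedBall (0 : EuclideanSpace ℝ (Fin n)) 1
            + b • Metric.closedBall (0 : EuclideanSpace ℝ (Fin n)) 1
            + c • Metric.closedBall (0 : EuclideanSpace ℝ (Fin n)) 1)
          + μ (a • Metric.closedBall (0 : EuclideanSpace ℝ (Fin n)) 1)) ↔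
      MonotoneOn (fun r : ℝ => V r * r ^ (n - 1)) (Ioi (0:ℝ))) ∧
    ((∀ a b c : ℝ, 0 ≤ a → 0 ≤ b → 0 ≤ c →
        μ (a • Metric.closedBall (0 : EuclideanSpace ℝ (Fin n)) 1
            + b • Metric.closedBall (0 : EuclideanSpace ℝ (Fin n)) 1
            + c • Metric.closedBall (0 : EuclideanSpace ℝ (Fin n)) 1)
          + μ (a • Metric.closedBall (0 : EuclideanSpace ℝ (Fin n)) 1)
        ≤ μ (a • Metric.closedBall (0 : EuclideanSpace ℝ (Fin n)) 1
            + b • Metric.closedBall (0 : EuclideanSpace ℝ (Fin n)) 1)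
          + μ (a • Metric.closedBall (0 : EuclideanSpace ℝ (Fin n)) 1
            + c • Metric.closedBall (0 : EuclideanSpace ℝ (Fin n)) 1)) ↔
      AntitoneOn (fun r : ℝ => V r * r ^ (n - 1)) (Ioi (0:ℝ))) := by
  
  haveI : Nonempty (Fin n) := ⟨⟨0, hn⟩⟩
  set g : ℝ → ℝ := fun r => V r * r ^ (n-1) with hg_def
  have hg : ContinuousOn g (Ici 0) := hVcont.mul ((continuous_pow (n-1)).continuousOn)
  set K : ℝ := (n : ℝ) * (volume (Metric.ball (0:EuclideanSpace ℝ (Fin n)) 1)).toReal with hK_def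
  have hK : 0 < K := by
    apply mul_pos (by exact_mod_cast hn : (0:ℝ) < n)
    rw [ENNReal.toReal_pos_iff]
    exact ⟨Metric.measure_ball_pos _ _ one_pos, measure_ball_lt_top⟩
  set I : ℝ → ℝ := fun s => ∫ r in (0:ℝ)..s, g r with hI_def
  have hball : ∀ a : ℝ, 0 ≤ a →
      a • Metric.closedBall (0:EuclideanSpace ℝ (Fin n)) 1 = Metric.closedBall 0 a := by
    intro a ha
    rw [_root_.smul_closedBall _ _ zero_le_one, smul_zero, mul_one, Real.norm_eq_abs,
      abs_of_nonneg ha]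
  have hadd : ∀ s t : ℝ, 0 ≤ s → 0 ≤ t →
      Metric.closedBall (0:EuclideanSpace ℝ (Fin n)) s + Metric.closedBall 0 t
        = Metric.closedBall 0 (s+t) := by
    intro s t hs ht
    rw [closedBall_add_closedBall hs ht, add_zero]
  have hform : ∀ a : ℝ, 0 ≤ a →
      μ (Metric.closedBall 0 a) = ENNReal.ofReal (K * I a) := by
    intro a ha
    rw [hμ]
    exact measure_closedBall_formula n hn V hVcont hVnonneg ha
  have hIint : ∀ u v : ℝ, 0 ≤ u → 0 ≤ v → IntervalIntegrable g volume u v := by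
    intro u v hu hv
    apply ContinuousOn.intervalIntegrable (hg.mono ?_)
    intro t ht
    rcases le_total u v with h | h
    · rw [uIcc_of_le h] at ht; exact le_trans hu ht.1
    · rw [uIcc_of_ge h] at ht; exact le_trans hv ht.1
  have hIsplit : ∀ s t : ℝ, 0 ≤ s → 0 ≤ t → I (s + t) = I s + ∫ r in s..(s+t), g r := by
    intro s t hs ht
    exact (intervalIntegral.integral_add_adjacent_intervals (hIint 0 s le_rfl hs)
      (hIint s (s+t) hs (by linarith))).symm
  have hInonneg : ∀ s : ℝ, 0 ≤ s → 0 ≤ I s := by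
    intro s hs
    apply intervalIntegral.integral_nonneg hs
    intro u hu
    exact mul_nonneg (hVnonneg u hu.1) (pow_nonneg hu.1 _)
  have hsets : ∀ a b c : ℝ, 0 ≤ a → 0 ≤ b → 0 ≤ c →
      μ (a • Metric.closedBall (0 : EuclideanSpace ℝ (Fin n)) 1
          + b • Metric.closedBall (0 : EuclideanSpace ℝ (Fin n)) 1)
        = ENNReal.ofReal (K * I (a+b))
      ∧ μ (a • Metric.closedBall (0 : EuclideanSpace ℝ (Fin n)) 1
          + c • Metric.closedBall (0 : EuclideanSpace ℝ (Fin n)) 1)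
        = ENNReal.ofReal (K * I (a+c))
      ∧ μ (a • Metric.closedBall (0 : EuclideanSpace ℝ (Fin n)) 1
          + b • Metric.closedBall (0 : EuclideanSpace ℝ (Fin n)) 1
          + c • Metric.closedBall (0 : EuclideanSpace ℝ (Fin n)) 1)
        = ENNReal.ofReal (K * I (a+b+c))
      ∧ μ (a • Metric.closedBall (0 : EuclideanSpace ℝ (Fin n)) 1)
        = ENNReal.ofReal (K * I a) := by
    intro a b c ha hb hc
    have s1 : a • Metric.closedBall (0 : EuclideanSpace ℝ (Fin n)) 1
        + b • Metric.closedBall (0 : EuclideanSpace ℝ (Fin n)) 1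
        = Metric.closedBall 0 (a+b) := by
      rw [hball a ha, hball b hb, hadd a b ha hb]
    have s3 : a • Metric.closedBall (0 : EuclideanSpace ℝ (Fin n)) 1
        + b • Metric.closedBall (0 : EuclideanSpace ℝ (Fin n)) 1
        + c • Metric.closedBall (0 : EuclideanSpace ℝ (Fin n)) 1
        = Metric.closedBall 0 (a+b+c) := by
      rw [s1, hball c hc, hadd (a+b) c (by linarith) hc]
    refine ⟨?_, ?_, ?_, ?_⟩
    · rw [s1]; exact hform (a+b) (by linarith)
    · rw [hball a ha, hball c hc, hadd a c ha hc]; exact hform (a+c) (by linarith)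
    · rw [s3]; exact hform (a+b+c) (by linarith)
    · rw [hball a ha]; exact hform a ha
  have hKI : ∀ a b c : ℝ, 0 ≤ a → 0 ≤ b → 0 ≤ c →
      ((ENNReal.ofReal (K * I (a+b)) + ENNReal.ofReal (K * I (a+c))
        ≤ ENNReal.ofReal (K * I (a+b+c)) + ENNReal.ofReal (K * I a)) ↔
       ((∫ r in a..(a+b), g r) ≤ ∫ r in (a+c)..(a+b+c), g r)) := by
    intro a b c ha hb hc
    have n1 : 0 ≤ K * I (a+b) := mul_nonneg hK.le (hInonneg _ (by linarith))
    have n2 : 0 ≤ K * I (a+c) := mul_nonneg hK.le (hInonneg _ (by linarith))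
    have n3 : 0 ≤ K * I (a+b+c) := mul_nonneg hK.le (hInonneg _ (by linarith))
    have n4 : 0 ≤ K * I a := mul_nonneg hK.le (hInonneg _ ha)
    rw [← ENNReal.ofReal_add n1 n2, ← ENNReal.ofReal_add n3 n4,
      ENNReal.ofReal_le_ofReal_iff (add_nonneg n3 n4), ← mul_add, ← mul_add,
      mul_le_mul_iff_right₀ hK]
    have e1 : I (a+b) = I a + ∫ r in a..(a+b), g r := hIsplit a b ha hb
    have e2 : I (a+b+c) = I (a+c) + ∫ r in (a+c)..(a+b+c), g r := by
      have h := hIsplit (a+c) b (by linarith) hb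
      rwa [show a + c + b = a + b + c from by ring] at h
    rw [e1, e2]
    constructor <;> intro h <;> linarith
  have hKI2 : ∀ a b c : ℝ, 0 ≤ a → 0 ≤ b → 0 ≤ c →
      ((ENNReal.ofReal (K * I (a+b+c)) + ENNReal.ofReal (K * I a)
        ≤ ENNReal.ofReal (K * I (a+b)) + ENNReal.ofReal (K * I (a+c))) ↔
       ((∫ r in (a+c)..(a+b+c), g r) ≤ ∫ r in a..(a+b), g r)) := by
    intro a b c ha hb hc
    have n1 : 0 ≤ K * I (a+b) := mul_nonneg hK.le (hInonneg _ (by linarith))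
    have n2 : 0 ≤ K * I (a+c) := mul_nonneg hK.le (hInonneg _ (by linarith))
    have n3 : 0 ≤ K * I (a+b+c) := mul_nonneg hK.le (hInonneg _ (by linarith))
    have n4 : 0 ≤ K * I a := mul_nonneg hK.le (hInonneg _ ha)
    rw [← ENNReal.ofReal_add n3 n4, ← ENNReal.ofReal_add n1 n2,
      ENNReal.ofReal_le_ofReal_iff (add_nonneg n1 n2), ← mul_add, ← mul_add,
      mul_le_mul_iff_right₀ hK]
    have e1 : I (a+b) = I a + ∫ r in a..(a+b), g r := hIsplit a b ha hb
    have e2 : I (a+b+c) = I (a+c) + ∫ r in (a+c)..(a+b+c), g r := by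
      have h := hIsplit (a+c) b (by linarith) hb
      rwa [show a + c + b = a + b + c from by ring] at h
    rw [e1, e2]
    constructor <;> intro h <;> linarith
  constructor
  · constructor
    · intro Hineq
      apply mono_of_gshift hg
      intro a b c ha hb hc
      have H := Hineq a b c ha hb hc
      obtain ⟨r1, r2, r3, r4⟩ := hsets a b c ha hb hc
      rw [r1, r2, r3, r4] at H
      exact (hKI a b c ha hb hc).mp H
    · intro hmono a b c ha hb hc
      obtain ⟨r1, r2, r3, r4⟩ := hsets a b c ha hb hc
      rw [r1, r2, r3, r4]
      exact (hKI a b c ha hb hc).mpr (gshift_le hg hmono ha hb hc)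
  · constructor
    · intro Hineq
      have hmono : MonotoneOn (fun r => -g r) (Ioi 0) := by
        apply mono_of_gshift hg.neg
        intro a b c ha hb hc
        have H := Hineq a b c ha hb hc
        obtain ⟨r1, r2, r3, r4⟩ := hsets a b c ha hb hc
        rw [r1, r2, r3, r4] at H
        have h2 := (hKI2 a b c ha hb hc).mp H
        simp only [Pi.neg_apply, intervalIntegral.integral_neg]
        linarith
      intro x hx y hy hxy
      have := hmono hx hy hxy
      simp only at this
      linarith
    · intro hanti a b c ha hb hc
      have hmono : MonotoneOn (fun r => -g r) (Ioi 0) :=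
        fun x hx y hy hxy => neg_le_neg (hanti hx hy hxy)
      have h2 := gshift_le hg.neg hmono ha hb hc
      simp only [Pi.neg_apply, intervalIntegral.integral_neg] at h2
      obtain ⟨r1, r2, r3, r4⟩ := hsets a b c ha hb hc
      rw [r1, r2, r3, r4]
      exact (hKI2 a b c ha hb hc).mpr (by linarith)
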